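/- arXiv:1701.07050 — 3 statements merged into one kernel-verified Lean document; each statement's English description precedes it below -/
import Mathlib

section
/- Suppose X₁ and X = [X₁, X₂] have full column rank (so that M₁X₂ also has full column rank). Then the matrix N₁ := M₁P satisfies N₁ = P M₁ = P M₁ P = M₁ P M₁ = N₁ M₁ = M₁ N₁ = N₁ N₁ = M₁ − M = P − P̄[X₁] = P̄[M₁X₂]; in particular N₁ is symmetric and idempotent. -/
open Matrix

variable {T G k₁ k₂ : ℕ}

/-- Orthogonal projection `P̄[A] = A(AᵀA)⁻¹Aᵀ` onto the column space of `A`. -/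
noncomputable def projM {n : Type*} [Fintype n] [DecidableEq n]
    (A : Matrix (Fin T) n ℝ) : Matrix (Fin T) (Fin T) ℝ :=
  A * (Aᵀ * A)⁻¹ * Aᵀ

/-- The annihilator `M̄[A] = I - P̄[A]`. -/
noncomputable def annM {n : Type*} [Fintype n] [DecidableEq n]
    (A : Matrix (Fin T) n ℝ) : Matrix (Fin T) (Fin T) ℝ :=
  1 - projM A

noncomputable def M1 (X₁ : Matrix (Fin T) (Fin k₁) ℝ) : Matrix (Fin T) (Fin T) ℝ :=
  annM X₁

noncomputable def Pm (X₁ : Matrix (Fin T) (Fin k₁) ℝ) (X₂ : Matrix (Fin T) (Fin k₂) ℝ) :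
    Matrix (Fin T) (Fin T) ℝ :=
  projM (fromCols X₁ X₂)

noncomputable def Mm (X₁ : Matrix (Fin T) (Fin k₁) ℝ) (X₂ : Matrix (Fin T) (Fin k₂) ℝ) :
    Matrix (Fin T) (Fin T) ℝ :=
  annM (fromCols X₁ X₂)

noncomputable def N1 (X₁ : Matrix (Fin T) (Fin k₁) ℝ) (X₂ : Matrix (Fin T) (Fin k₂) ℝ) :
    Matrix (Fin T) (Fin T) ℝ :=
  M1 X₁ * Pm X₁ X₂

/-- A full-rank square matrix over ℝ is a unit. -/
lemma aux_isUnit_of_rank {n : Type*} [Fintype n] [DecidableEq n]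
    (A : Matrix n n ℝ) (h : A.rank = Fintype.card n) : IsUnit A := by
  rw [← Matrix.mulVec_surjective_iff_isUnit]
  have htop : LinearMap.range A.mulVecLin = ⊤ := by
    apply Submodule.eq_top_of_finrank_eq
    rw [← Matrix.rank, h, Module.finrank_fintype_fun_eq_card]
  intro y
  obtain ⟨x, hx⟩ := LinearMap.range_eq_top.mp htop y
  exact ⟨x, hx⟩

lemma aux_projM_mul {T : ℕ} {n : Type*} [Fintype n] [DecidableEq n]
    (A : Matrix (Fin T) n ℝ) (h : IsUnit (Aᵀ * A)) : projM A * A = A := by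
  have hd : IsUnit (Aᵀ * A).det := (Matrix.isUnit_iff_isUnit_det _).mp h
  calc projM A * A = A * ((Aᵀ * A)⁻¹ * (Aᵀ * A)) := by
        unfold projM; rw [Matrix.mul_assoc, Matrix.mul_assoc]
    _ = A := by rw [Matrix.nonsing_inv_mul _ hd, Matrix.mul_one]

lemma aux_projM_symm {T : ℕ} {n : Type*} [Fintype n] [DecidableEq n]
    (A : Matrix (Fin T) n ℝ) : (projM A)ᵀ = projM A := by
  have h : ((Aᵀ * A)⁻¹)ᵀ = (Aᵀ * A)⁻¹ := by
    rw [Matrix.transpose_nonsing_inv, transpose_mul, transpose_transpose]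
  simp [projM, transpose_mul, h, Matrix.mul_assoc]

/-- **Properties of `N₁ = M₁P`.**  If `X₁` and `X = [X₁, X₂]` have full column rank,
then `N₁ = PM₁ = PM₁P = M₁PM₁ = N₁M₁ = M₁N₁ = N₁N₁ = M₁ − M = P − P̄[X₁] = P̄[M₁X₂]`;
in particular `N₁` is symmetric and idempotent. -/
theorem stmt2 {T k₁ k₂ : ℕ}
    (X₁ : Matrix (Fin T) (Fin k₁) ℝ) (X₂ : Matrix (Fin T) (Fin k₂) ℝ)
    (hrX₁ : X₁.rank = k₁) (hrX : (fromCols X₁ X₂).rank = k₁ + k₂) :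
    N1 X₁ X₂ = Pm X₁ X₂ * M1 X₁ ∧
    N1 X₁ X₂ = Pm X₁ X₂ * M1 X₁ * Pm X₁ X₂ ∧
    N1 X₁ X₂ = M1 X₁ * Pm X₁ X₂ * M1 X₁ ∧
    N1 X₁ X₂ = N1 X₁ X₂ * M1 X₁ ∧
    N1 X₁ X₂ = M1 X₁ * N1 X₁ X₂ ∧
    N1 X₁ X₂ = N1 X₁ X₂ * N1 X₁ X₂ ∧
    N1 X₁ X₂ = M1 X₁ - Mm X₁ X₂ ∧
    N1 X₁ X₂ = Pm X₁ X₂ - projM X₁ ∧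
    N1 X₁ X₂ = projM (M1 X₁ * X₂) ∧
    (N1 X₁ X₂).IsSymm ∧
    N1 X₁ X₂ * N1 X₁ X₂ = N1 X₁ X₂ := by
  set X : Matrix (Fin T) (Fin k₁ ⊕ Fin k₂) ℝ := fromCols X₁ X₂ with hXdef
  have hU1 : IsUnit (X₁ᵀ * X₁) :=
    aux_isUnit_of_rank _ (by rw [Matrix.rank_transpose_mul_self, hrX₁, Fintype.card_fin])
  have hUX : IsUnit (Xᵀ * X) :=
    aux_isUnit_of_rank _
      (by rw [Matrix.rank_transpose_mul_self, hrX]; simp [Fintype.card_sum])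
  set P₁ : Matrix (Fin T) (Fin T) ℝ := projM X₁ with hP₁def
  set P : Matrix (Fin T) (Fin T) ℝ := projM X with hPdef
  have hM1 : M1 X₁ = 1 - P₁ := rfl
  have hPm : Pm X₁ X₂ = P := rfl
  have hMm : Mm X₁ X₂ = 1 - P := rfl
  have hPX : P * X = X := aux_projM_mul X hUX
  have hP₁X₁ : P₁ * X₁ = X₁ := aux_projM_mul X₁ hU1
  have hPX' : fromCols (P * X₁) (P * X₂) = fromCols X₁ X₂ := by
    rw [← mul_fromCols, ← hXdef, hPX]
  have hPX₁ : P * X₁ = X₁ := ((fromCols_ext_iff _ _ _ _).mp hPX').1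
  have hPX₂ : P * X₂ = X₂ := ((fromCols_ext_iff _ _ _ _).mp hPX').2
  have hPP₁ : P * P₁ = P₁ := by
    rw [hP₁def]
    show P * (X₁ * (X₁ᵀ * X₁)⁻¹ * X₁ᵀ) = X₁ * (X₁ᵀ * X₁)⁻¹ * X₁ᵀ
    rw [← Matrix.mul_assoc, ← Matrix.mul_assoc, hPX₁]
  have hP₁P : P₁ * P = P₁ := by
    have := congrArg Matrix.transpose hPP₁
    rwa [transpose_mul, hPdef, hP₁def, aux_projM_symm, aux_projM_symm] at this
  have hPP : P * P = P := by
    rw [hPdef]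
    show P * (X * (Xᵀ * X)⁻¹ * Xᵀ) = X * (Xᵀ * X)⁻¹ * Xᵀ
    rw [← Matrix.mul_assoc, ← Matrix.mul_assoc, hPX]
  have hP₁P₁ : P₁ * P₁ = P₁ := by
    rw [hP₁def]
    show P₁ * (X₁ * (X₁ᵀ * X₁)⁻¹ * X₁ᵀ) = X₁ * (X₁ᵀ * X₁)⁻¹ * X₁ᵀ
    rw [← Matrix.mul_assoc, ← Matrix.mul_assoc, hP₁X₁]
  have hN : N1 X₁ X₂ = P - P₁ := by
    rw [N1, hM1, hPm, sub_mul, one_mul, hP₁P]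
  -- the projection onto M₁X₂
  set W : Matrix (Fin T) (Fin k₂) ℝ := M1 X₁ * X₂ with hWdef
  have hWeq : W = X₂ - P₁ * X₂ := by rw [hWdef, hM1, Matrix.sub_mul, Matrix.one_mul]
  have hUW : IsUnit (Wᵀ * W) := by
    haveI := hU1.invertible
    have hXtX : Xᵀ * X = fromBlocks (X₁ᵀ * X₁) (X₁ᵀ * X₂) (X₂ᵀ * X₁) (X₂ᵀ * X₂) := by
      rw [hXdef, transpose_fromCols, fromRows_mul_fromCols]
    have hschur :
        IsUnit (X₂ᵀ * X₂ - X₂ᵀ * X₁ * ⅟(X₁ᵀ * X₁) * (X₁ᵀ * X₂)) :=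
      (Matrix.isUnit_fromBlocks_iff_of_invertible₁₁).mp (hXtX ▸ hUX)
    have hP₁X₂' : P₁ * X₂ = X₁ * ((X₁ᵀ * X₁)⁻¹ * (X₁ᵀ * X₂)) := by
      rw [hP₁def]
      show X₁ * (X₁ᵀ * X₁)⁻¹ * X₁ᵀ * X₂ = _
      simp only [Matrix.mul_assoc]
    have hP₁idem' : P₁ * (P₁ * X₂) = P₁ * X₂ := by
      rw [← Matrix.mul_assoc, hP₁P₁]
    have hWtW : Wᵀ * W = X₂ᵀ * X₂ - X₂ᵀ * X₁ * ⅟(X₁ᵀ * X₁) * (X₁ᵀ * X₂) := by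
      rw [invOf_eq_nonsing_inv]
      calc Wᵀ * W = (X₂ᵀ - X₂ᵀ * P₁) * (X₂ - P₁ * X₂) := by
            rw [hWeq, transpose_sub, transpose_mul, hP₁def, aux_projM_symm]
        _ = X₂ᵀ * X₂ - X₂ᵀ * X₁ * (X₁ᵀ * X₁)⁻¹ * (X₁ᵀ * X₂) := by
            simp only [Matrix.sub_mul, Matrix.mul_sub, Matrix.mul_assoc]
            rw [hP₁idem', hP₁X₂']
            abel
    rw [hWtW]; exact hschur
  have hRW : projM W * W = W := aux_projM_mul W hUW
  have hsymmQ : (P - P₁)ᵀ = P - P₁ := by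
    rw [transpose_sub, hPdef, hP₁def, aux_projM_symm, aux_projM_symm]
  have hQW : (P - P₁) * W = W := by
    rw [hWeq, Matrix.mul_sub, ← Matrix.mul_assoc, Matrix.sub_mul, Matrix.sub_mul, hPX₂, hPP₁,
      hP₁P₁, sub_self, Matrix.zero_mul, sub_zero]
  -- Q = W * E for E the lower block of (XᵀX)⁻¹Xᵀ
  set E : Matrix (Fin k₂) (Fin T) ℝ := toRows₂ ((Xᵀ * X)⁻¹ * Xᵀ) with hEdef
  have hQE : P - P₁ = W * E := by
    have h1 : (1 - P₁) * X = fromCols 0 W := by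
      rw [hXdef, mul_fromCols, ← hM1, hWdef, hM1, Matrix.sub_mul, Matrix.one_mul,
        hP₁X₁, sub_self, ← hM1]
    calc P - P₁ = (1 - P₁) * P := by rw [sub_mul, one_mul, hP₁P]
      _ = ((1 - P₁) * X) * ((Xᵀ * X)⁻¹ * Xᵀ) := by
          rw [hPdef]
          show (1 - P₁) * (X * (Xᵀ * X)⁻¹ * Xᵀ) = _
          rw [Matrix.mul_assoc X, ← Matrix.mul_assoc (1 - P₁) X ((Xᵀ * X)⁻¹ * Xᵀ)]
      _ = (fromCols 0 W : Matrix (Fin T) (Fin k₁ ⊕ Fin k₂) ℝ) *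
            fromRows (toRows₁ ((Xᵀ * X)⁻¹ * Xᵀ)) (toRows₂ ((Xᵀ * X)⁻¹ * Xᵀ)) := by
          rw [h1, fromRows_toRows]
      _ = W * E := by rw [fromCols_mul_fromRows, Matrix.zero_mul, zero_add, hEdef]
  have hQR : (P - P₁) * projM W = projM W := by
    show (P - P₁) * (W * (Wᵀ * W)⁻¹ * Wᵀ) = W * (Wᵀ * W)⁻¹ * Wᵀ
    rw [← Matrix.mul_assoc, ← Matrix.mul_assoc, hQW]
  have hRQ : projM W * (P - P₁) = P - P₁ := by
    rw [hQE, ← Matrix.mul_assoc, hRW]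
  have hRQ' : projM W * (P - P₁) = projM W := by
    have := congrArg Matrix.transpose hQR
    rwa [transpose_mul, hsymmQ, aux_projM_symm] at this
  have hQprojW : P - P₁ = projM W := by rw [← hRQ, hRQ']
  refine ⟨?_, ?_, ?_, ?_, ?_, ?_, ?_, ?_, ?_, ?_, ?_⟩
  · rw [hN, hPm, hM1, mul_sub, mul_one, hPP₁]
  · rw [hN, hPm, hM1, mul_sub, mul_one, hPP₁, sub_mul, hPP, hP₁P]
  · rw [hN, hPm, hM1, sub_mul, one_mul, hP₁P, mul_sub, mul_one, sub_mul, hPP₁, hP₁P₁,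
      sub_sub_sub_cancel_right]
  · rw [hN, hM1, mul_sub, mul_one, sub_mul, hPP₁, hP₁P₁, sub_sub_sub_cancel_right]
  · rw [hN, hM1, mul_sub, sub_mul, sub_mul, one_mul, one_mul, hP₁P, hP₁P₁, sub_self,
      sub_zero]
  · rw [hN, mul_sub, sub_mul, sub_mul, hPP, hP₁P, hPP₁, hP₁P₁, sub_self, sub_zero]
  · rw [hN, hM1, hMm, sub_sub_sub_cancel_left]
  · rw [hN, hPm, hP₁def]
  · rw [hN, hQprojW]
  · rw [Matrix.IsSymm, hN, hsymmQ]
  · rw [hN, mul_sub, sub_mul, sub_mul, hPP, hP₁P, hPP₁, hP₁P₁, sub_self, sub_zero]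
end

section
/- Under the rank condition: Ω̂_LS − Ω̂_IV = Σ̂_V; the matrix Δ̂ = Ω̂_IV⁻¹ − Ω̂_LS⁻¹ is invertible; Δ̂⁻¹ = Ω̂_IV + Ω̂_IV Σ̂_V⁻¹ Ω̂_IV = Ω̂_LS Σ̂_V⁻¹ Ω̂_LS − Ω̂_LS = (1/T)·YᵀN₁[I_T + Y(YᵀMY)⁻¹Yᵀ]N₁Y = (1/T)·YᵀM₁[Y(YᵀMY)⁻¹Yᵀ − I_T]M₁Y; and Δ̂⁻¹ is positive definite. -/
open Matrix

variable {T G k₁ k₂ : ℕ}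

noncomputable def B1 (Y : Matrix (Fin T) (Fin G) ℝ) (X₁ : Matrix (Fin T) (Fin k₁) ℝ) :
    Matrix (Fin G) (Fin T) ℝ :=
  (Yᵀ * M1 X₁ * Y)⁻¹ * (Yᵀ * M1 X₁)

noncomputable def B2 (Y : Matrix (Fin T) (Fin G) ℝ) (X₁ : Matrix (Fin T) (Fin k₁) ℝ)
    (X₂ : Matrix (Fin T) (Fin k₂) ℝ) : Matrix (Fin G) (Fin T) ℝ :=
  (Yᵀ * N1 X₁ X₂ * Y)⁻¹ * (Yᵀ * N1 X₁ X₂)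

noncomputable def C1 (Y : Matrix (Fin T) (Fin G) ℝ) (X₁ : Matrix (Fin T) (Fin k₁) ℝ)
    (X₂ : Matrix (Fin T) (Fin k₂) ℝ) : Matrix (Fin G) (Fin T) ℝ :=
  B2 Y X₁ X₂ - B1 Y X₁

/-- OLS estimator `β̂`. -/
noncomputable def betaOLS (y : Fin T → ℝ) (Y : Matrix (Fin T) (Fin G) ℝ)
    (X₁ : Matrix (Fin T) (Fin k₁) ℝ) : Fin G → ℝ :=
  B1 Y X₁ *ᵥ y

/-- 2SLS estimator `β̃`. -/
noncomputable def beta2S (y : Fin T → ℝ) (Y : Matrix (Fin T) (Fin G) ℝ)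
    (X₁ : Matrix (Fin T) (Fin k₁) ℝ) (X₂ : Matrix (Fin T) (Fin k₂) ℝ) : Fin G → ℝ :=
  B2 Y X₁ X₂ *ᵥ y

noncomputable def OmIV (Y : Matrix (Fin T) (Fin G) ℝ) (X₁ : Matrix (Fin T) (Fin k₁) ℝ)
    (X₂ : Matrix (Fin T) (Fin k₂) ℝ) : Matrix (Fin G) (Fin G) ℝ :=
  (T : ℝ)⁻¹ • (Yᵀ * N1 X₁ X₂ * Y)

noncomputable def OmLS (Y : Matrix (Fin T) (Fin G) ℝ) (X₁ : Matrix (Fin T) (Fin k₁) ℝ) :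
    Matrix (Fin G) (Fin G) ℝ :=
  (T : ℝ)⁻¹ • (Yᵀ * M1 X₁ * Y)

noncomputable def SigV (Y : Matrix (Fin T) (Fin G) ℝ) (X₁ : Matrix (Fin T) (Fin k₁) ℝ)
    (X₂ : Matrix (Fin T) (Fin k₂) ℝ) : Matrix (Fin G) (Fin G) ℝ :=
  (T : ℝ)⁻¹ • (Yᵀ * Mm X₁ X₂ * Y)

noncomputable def Dhat (Y : Matrix (Fin T) (Fin G) ℝ) (X₁ : Matrix (Fin T) (Fin k₁) ℝ)
    (X₂ : Matrix (Fin T) (Fin k₂) ℝ) : Matrix (Fin G) (Fin G) ℝ :=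
  (OmIV Y X₁ X₂)⁻¹ - (OmLS Y X₁)⁻¹

noncomputable def Psi0 (Y : Matrix (Fin T) (Fin G) ℝ) (X₁ : Matrix (Fin T) (Fin k₁) ℝ)
    (X₂ : Matrix (Fin T) (Fin k₂) ℝ) : Matrix (Fin T) (Fin T) ℝ :=
  (C1 Y X₁ X₂)ᵀ * (Dhat Y X₁ X₂)⁻¹ * C1 Y X₁ X₂

noncomputable def N2 (Y : Matrix (Fin T) (Fin G) ℝ) (X₁ : Matrix (Fin T) (Fin k₁) ℝ)
    (X₂ : Matrix (Fin T) (Fin k₂) ℝ) : Matrix (Fin T) (Fin T) ℝ :=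
  1 - M1 X₁ * Y * B2 Y X₁ X₂

noncomputable def Lam1 (Y : Matrix (Fin T) (Fin G) ℝ) (X₁ : Matrix (Fin T) (Fin k₁) ℝ)
    (X₂ : Matrix (Fin T) (Fin k₂) ℝ) : Matrix (Fin T) (Fin T) ℝ :=
  (T : ℝ)⁻¹ • (N1 X₁ X₂ * annM (N1 X₁ X₂ * Y) * N1 X₁ X₂)

noncomputable def Lam2 (Y : Matrix (Fin T) (Fin G) ℝ) (X₁ : Matrix (Fin T) (Fin k₁) ℝ)
    (X₂ : Matrix (Fin T) (Fin k₂) ℝ) : Matrix (Fin T) (Fin T) ℝ :=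
  M1 X₁ * ((T : ℝ)⁻¹ • annM (M1 X₁ * Y) - Psi0 Y X₁ X₂) * M1 X₁

noncomputable def Lam3 (Y : Matrix (Fin T) (Fin G) ℝ) (X₁ : Matrix (Fin T) (Fin k₁) ℝ)
    (X₂ : Matrix (Fin T) (Fin k₂) ℝ) : Matrix (Fin T) (Fin T) ℝ :=
  (T : ℝ)⁻¹ • (M1 X₁ * (N2 Y X₁ X₂)ᵀ * N2 Y X₁ X₂ * M1 X₁)

noncomputable def Lam4 (Y : Matrix (Fin T) (Fin G) ℝ) (X₁ : Matrix (Fin T) (Fin k₁) ℝ) :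
    Matrix (Fin T) (Fin T) ℝ :=
  (T : ℝ)⁻¹ • (M1 X₁ * annM (M1 X₁ * Y) * M1 X₁)

def Ybar (Y : Matrix (Fin T) (Fin G) ℝ) (X₁ : Matrix (Fin T) (Fin k₁) ℝ) :
    Matrix (Fin T) (Fin G ⊕ Fin k₁) ℝ :=
  fromCols Y X₁

def Zfull (Y : Matrix (Fin T) (Fin G) ℝ) (X₁ : Matrix (Fin T) (Fin k₁) ℝ)
    (X₂ : Matrix (Fin T) (Fin k₂) ℝ) : Matrix (Fin T) (Fin G ⊕ (Fin k₁ ⊕ Fin k₂)) ℝ :=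
  fromCols Y (fromCols X₁ X₂)

noncomputable def PsiR (Y : Matrix (Fin T) (Fin G) ℝ) (X₁ : Matrix (Fin T) (Fin k₁) ℝ)
    (X₂ : Matrix (Fin T) (Fin k₂) ℝ) : Matrix (Fin T) (Fin T) ℝ :=
  (T : ℝ)⁻¹ • (annM (Ybar Y X₁) - annM (Zfull Y X₁ X₂))

noncomputable def LamR (Y : Matrix (Fin T) (Fin G) ℝ) (X₁ : Matrix (Fin T) (Fin k₁) ℝ)
    (X₂ : Matrix (Fin T) (Fin k₂) ℝ) : Matrix (Fin T) (Fin T) ℝ :=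
  (T : ℝ)⁻¹ • annM (Zfull Y X₁ X₂)

/-- `σ̂² = (1/T)(y−Yβ̂)ᵀM₁(y−Yβ̂)`. -/
noncomputable def sigHat2 (y : Fin T → ℝ) (Y : Matrix (Fin T) (Fin G) ℝ)
    (X₁ : Matrix (Fin T) (Fin k₁) ℝ) : ℝ :=
  (T : ℝ)⁻¹ * ((y - Y *ᵥ betaOLS y Y X₁) ⬝ᵥ (M1 X₁ *ᵥ (y - Y *ᵥ betaOLS y Y X₁)))

/-- `σ̃² = (1/T)(y−Yβ̃)ᵀM₁(y−Yβ̃)`. -/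
noncomputable def sigTil2 (y : Fin T → ℝ) (Y : Matrix (Fin T) (Fin G) ℝ)
    (X₁ : Matrix (Fin T) (Fin k₁) ℝ) (X₂ : Matrix (Fin T) (Fin k₂) ℝ) : ℝ :=
  (T : ℝ)⁻¹ * ((y - Y *ᵥ beta2S y Y X₁ X₂) ⬝ᵥ (M1 X₁ *ᵥ (y - Y *ᵥ beta2S y Y X₁ X₂)))

/-- `σ̃₁² = (1/T)(y−Yβ̃)ᵀN₁(y−Yβ̃)`. -/
noncomputable def sigTil1sq (y : Fin T → ℝ) (Y : Matrix (Fin T) (Fin G) ℝ)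
    (X₁ : Matrix (Fin T) (Fin k₁) ℝ) (X₂ : Matrix (Fin T) (Fin k₂) ℝ) : ℝ :=
  (T : ℝ)⁻¹ * ((y - Y *ᵥ beta2S y Y X₁ X₂) ⬝ᵥ (N1 X₁ X₂ *ᵥ (y - Y *ᵥ beta2S y Y X₁ X₂)))

/-- `σ̃₂² = σ̂² − (β̃−β̂)ᵀΔ̂⁻¹(β̃−β̂)`. -/
noncomputable def sigTil2sq (y : Fin T → ℝ) (Y : Matrix (Fin T) (Fin G) ℝ)
    (X₁ : Matrix (Fin T) (Fin k₁) ℝ) (X₂ : Matrix (Fin T) (Fin k₂) ℝ) : ℝ :=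
  sigHat2 y Y X₁ -
    (beta2S y Y X₁ X₂ - betaOLS y Y X₁) ⬝ᵥ
      ((Dhat Y X₁ X₂)⁻¹ *ᵥ (beta2S y Y X₁ X₂ - betaOLS y Y X₁))

/-- The rank condition: `X₁`, `X = [X₁, X₂]`, `[Y, X]` and `[P̄[X]Y, X₁]` all have
full column rank. -/
def RankCond (Y : Matrix (Fin T) (Fin G) ℝ) (X₁ : Matrix (Fin T) (Fin k₁) ℝ)
    (X₂ : Matrix (Fin T) (Fin k₂) ℝ) : Prop :=
  X₁.rank = k₁ ∧ (fromCols X₁ X₂).rank = k₁ + k₂ ∧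
    (fromCols Y (fromCols X₁ X₂)).rank = G + (k₁ + k₂) ∧
    (fromCols (Pm X₁ X₂ * Y) X₁).rank = G + k₁

section AuxLemmas

open Matrix

variable {T : ℕ} {n : Type*} [Fintype n] [DecidableEq n]

lemma mulVec_eq_zero_of_rank (A : Matrix (Fin T) n ℝ) (h : A.rank = Fintype.card n)
    {v : n → ℝ} (hv : A *ᵥ v = 0) : v = 0 := by
  have hk := LinearMap.finrank_range_add_finrank_ker (A.mulVecLin)
  rw [Module.finrank_fintype_fun_eq_card] at hk
  rw [Matrix.rank] at h
  have hker : Module.finrank ℝ (LinearMap.ker A.mulVecLin) = 0 := by omega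
  have hbot : LinearMap.ker A.mulVecLin = ⊥ := Submodule.finrank_eq_zero.mp hker
  have hv' : v ∈ LinearMap.ker A.mulVecLin := by
    simpa [Matrix.mulVecLin_apply] using hv
  rw [hbot] at hv'
  simpa using hv'

lemma posDef_transpose_mul_self' (A : Matrix (Fin T) n ℝ)
    (hinj : ∀ v, A *ᵥ v = 0 → v = 0) : (Aᵀ * A).PosDef := by
  refine Matrix.PosDef.of_dotProduct_mulVec_pos ?_ (fun x hx => ?_)
  · have := Matrix.isHermitian_conjTranspose_mul_self A
    simpa using this
  · have h1 : star x ⬝ᵥ ((Aᵀ * A) *ᵥ x) = (A *ᵥ x) ⬝ᵥ (A *ᵥ x) := by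
      rw [star_trivial, ← Matrix.mulVec_mulVec, Matrix.dotProduct_mulVec,
        Matrix.vecMul_transpose]
    rw [h1]
    have h2 : A *ᵥ x ≠ 0 := fun h => hx (hinj x h)
    have h3 : (A *ᵥ x) ⬝ᵥ (A *ᵥ x) ≠ 0 := fun h => h2 (dotProduct_self_eq_zero.mp h)
    have h4 : 0 ≤ (A *ᵥ x) ⬝ᵥ (A *ᵥ x) :=
      Finset.sum_nonneg fun i _ => mul_self_nonneg _
    exact lt_of_le_of_ne h4 (Ne.symm h3)

lemma posDef_smul_of_pos {M : Matrix n n ℝ} (hM : M.PosDef) {c : ℝ} (hc : 0 < c) :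
    (c • M).PosDef := by
  refine Matrix.PosDef.of_dotProduct_mulVec_pos ?_ (fun x hx => ?_)
  · have h1 := hM.1
    unfold Matrix.IsHermitian at h1 ⊢
    rw [Matrix.conjTranspose_smul, h1]
    simp
  · have := hM.dotProduct_mulVec_pos hx
    rw [Matrix.smul_mulVec, dotProduct_smul]
    exact smul_pos hc this

lemma projM_transpose (A : Matrix (Fin T) n ℝ) : (projM A)ᵀ = projM A := by
  unfold projM
  rw [Matrix.transpose_mul, Matrix.transpose_mul, Matrix.transpose_transpose,
    Matrix.transpose_nonsing_inv, Matrix.transpose_mul, Matrix.transpose_transpose,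
    Matrix.mul_assoc]

lemma projM_mul_self (A : Matrix (Fin T) n ℝ) (h : IsUnit (Aᵀ * A).det) :
    projM A * A = A := by
  unfold projM
  rw [Matrix.mul_assoc, Matrix.mul_assoc, Matrix.nonsing_inv_mul _ h, Matrix.mul_one]

lemma projM_idem (A : Matrix (Fin T) n ℝ) (h : IsUnit (Aᵀ * A).det) :
    projM A * projM A = projM A := by
  nth_rewrite 2 [projM]
  rw [← Matrix.mul_assoc, ← Matrix.mul_assoc, projM_mul_self A h, projM]

lemma inv_smul_mat {c : ℝ} (hc : c ≠ 0) {A : Matrix n n ℝ} (h : IsUnit A.det) :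
    (c • A)⁻¹ = c⁻¹ • A⁻¹ := by
  apply Matrix.inv_eq_right_inv
  rw [Matrix.smul_mul, Matrix.mul_smul, smul_smul, mul_inv_cancel₀ hc,
    Matrix.mul_nonsing_inv _ h, one_smul]

end AuxLemmas

/-- Under the rank condition, `Ω̂_LS − Ω̂_IV = Σ̂_V`; the matrix `Δ̂ = Ω̂_IV⁻¹ − Ω̂_LS⁻¹`
is invertible; `Δ̂⁻¹ = Ω̂_IV + Ω̂_IV Σ̂_V⁻¹ Ω̂_IV = Ω̂_LS Σ̂_V⁻¹ Ω̂_LS − Ω̂_LS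
= (1/T)·YᵀN₁[I_T + Y(YᵀMY)⁻¹Yᵀ]N₁Y = (1/T)·YᵀM₁[Y(YᵀMY)⁻¹Yᵀ − I_T]M₁Y`;
and `Δ̂⁻¹` is positive definite. -/
theorem stmt3 {T G k₁ k₂ : ℕ}
    (hT : 0 < T) (hG : 0 < G) (hk₁ : 0 < k₁) (hk₂ : 0 < k₂)
    (Y : Matrix (Fin T) (Fin G) ℝ)
    (X₁ : Matrix (Fin T) (Fin k₁) ℝ) (X₂ : Matrix (Fin T) (Fin k₂) ℝ)
    (hrank : RankCond Y X₁ X₂) :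
    OmLS Y X₁ - OmIV Y X₁ X₂ = SigV Y X₁ X₂ ∧
    IsUnit (Dhat Y X₁ X₂) ∧
    (Dhat Y X₁ X₂)⁻¹
      = OmIV Y X₁ X₂ + OmIV Y X₁ X₂ * (SigV Y X₁ X₂)⁻¹ * OmIV Y X₁ X₂ ∧
    (Dhat Y X₁ X₂)⁻¹
      = OmLS Y X₁ * (SigV Y X₁ X₂)⁻¹ * OmLS Y X₁ - OmLS Y X₁ ∧
    (Dhat Y X₁ X₂)⁻¹
      = (T : ℝ)⁻¹ •
          (Yᵀ * N1 X₁ X₂ * (1 + Y * (Yᵀ * Mm X₁ X₂ * Y)⁻¹ * Yᵀ) * (N1 X₁ X₂ * Y)) ∧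
    (Dhat Y X₁ X₂)⁻¹
      = (T : ℝ)⁻¹ •
          (Yᵀ * M1 X₁ * (Y * (Yᵀ * Mm X₁ X₂ * Y)⁻¹ * Yᵀ - 1) * (M1 X₁ * Y)) ∧
    ((Dhat Y X₁ X₂)⁻¹).PosDef := by
  classical
  obtain ⟨h1, h2, h3, h4⟩ := hrank
  have hX₁inj : ∀ v, X₁ *ᵥ v = 0 → v = 0 := fun v hv =>
    mulVec_eq_zero_of_rank X₁ (by simpa using h1) hv
  have hXfinj : ∀ v, fromCols X₁ X₂ *ᵥ v = 0 → v = 0 := fun v hv =>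
    mulVec_eq_zero_of_rank _ (by simpa using h2) hv
  have hYXinj : ∀ v, fromCols Y (fromCols X₁ X₂) *ᵥ v = 0 → v = 0 := fun v hv =>
    mulVec_eq_zero_of_rank _ (by simpa using h3) hv
  have hPYinj : ∀ v, fromCols (Pm X₁ X₂ * Y) X₁ *ᵥ v = 0 → v = 0 := fun v hv =>
    mulVec_eq_zero_of_rank _ (by simpa using h4) hv
  have hg1 : (X₁ᵀ * X₁).PosDef := posDef_transpose_mul_self' X₁ hX₁inj
  have hg1d : IsUnit (X₁ᵀ * X₁).det := isUnit_iff_ne_zero.mpr hg1.det_pos.ne'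
  have hg2 := posDef_transpose_mul_self' (fromCols X₁ X₂) hXfinj
  have hg2d : IsUnit ((fromCols X₁ X₂)ᵀ * fromCols X₁ X₂).det :=
    isUnit_iff_ne_zero.mpr hg2.det_pos.ne'
  have hP₁X : projM X₁ * X₁ = X₁ := projM_mul_self X₁ hg1d
  have hPidem : projM (fromCols X₁ X₂) * projM (fromCols X₁ X₂)
      = projM (fromCols X₁ X₂) := projM_idem _ hg2d
  have hP₁idem : projM X₁ * projM X₁ = projM X₁ := projM_idem _ hg1d
  have hXsub : fromCols X₁ X₂ *
      fromRows (1 : Matrix (Fin k₁) (Fin k₁) ℝ) (0 : Matrix (Fin k₂) (Fin k₁) ℝ) = X₁ := by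
    rw [fromCols_mul_fromRows]; simp
  have hPX₁ : projM (fromCols X₁ X₂) * X₁ = X₁ := by
    calc projM (fromCols X₁ X₂) * X₁
        = projM (fromCols X₁ X₂) * (fromCols X₁ X₂ *
            fromRows (1 : Matrix (Fin k₁) (Fin k₁) ℝ) (0 : Matrix (Fin k₂) (Fin k₁) ℝ)) := by
          rw [hXsub]
      _ = projM (fromCols X₁ X₂) * fromCols X₁ X₂ *
            fromRows (1 : Matrix (Fin k₁) (Fin k₁) ℝ) (0 : Matrix (Fin k₂) (Fin k₁) ℝ) := by
          rw [Matrix.mul_assoc]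
      _ = X₁ := by rw [projM_mul_self _ hg2d, hXsub]
  have hPP₁ : projM (fromCols X₁ X₂) * projM X₁ = projM X₁ := by
    conv_lhs => rw [show projM X₁ = X₁ * ((X₁ᵀ * X₁)⁻¹ * X₁ᵀ) from by
      rw [projM, Matrix.mul_assoc]]
    rw [← Matrix.mul_assoc, hPX₁, projM, Matrix.mul_assoc]
  have hP₁P : projM X₁ * projM (fromCols X₁ X₂) = projM X₁ := by
    have h := congrArg Matrix.transpose hPP₁
    rwa [Matrix.transpose_mul, projM_transpose, projM_transpose] at h
  have hN : N1 X₁ X₂ = projM (fromCols X₁ X₂) - projM X₁ := by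
    show annM X₁ * projM (fromCols X₁ X₂) = _
    rw [annM, Matrix.sub_mul, Matrix.one_mul, hP₁P]
  have hNT : (N1 X₁ X₂)ᵀ = N1 X₁ X₂ := by
    rw [hN, Matrix.transpose_sub, projM_transpose, projM_transpose]
  have hNN : N1 X₁ X₂ * N1 X₁ X₂ = N1 X₁ X₂ := by
    rw [hN, Matrix.sub_mul, Matrix.mul_sub, Matrix.mul_sub, hPidem, hPP₁, hP₁P, hP₁idem]
    abel
  have hMm : Mm X₁ X₂ = 1 - projM (fromCols X₁ X₂) := rfl
  have hMmT : (Mm X₁ X₂)ᵀ = Mm X₁ X₂ := by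
    rw [hMm, Matrix.transpose_sub, Matrix.transpose_one, projM_transpose]
  have hMmMm : Mm X₁ X₂ * Mm X₁ X₂ = Mm X₁ X₂ := by
    rw [hMm, Matrix.sub_mul, Matrix.one_mul, Matrix.mul_sub, Matrix.mul_one, hPidem]
    abel
  have hM1 : M1 X₁ = 1 - projM X₁ := rfl
  have hM1T : (M1 X₁)ᵀ = M1 X₁ := by
    rw [hM1, Matrix.transpose_sub, Matrix.transpose_one, projM_transpose]
  have hM1M1 : M1 X₁ * M1 X₁ = M1 X₁ := by
    rw [hM1, Matrix.sub_mul, Matrix.one_mul, Matrix.mul_sub, Matrix.mul_one, hP₁idem]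
    abel
  have hM1dec : M1 X₁ = Mm X₁ X₂ + N1 X₁ X₂ := by
    rw [hM1, hMm, hN]; abel
  -- injectivity of Mm * Y and N1 * Y
  have hMmYinj : ∀ v, (Mm X₁ X₂ * Y) *ᵥ v = 0 → v = 0 := by
    intro v hv
    rw [← Matrix.mulVec_mulVec] at hv
    rw [hMm, Matrix.sub_mulVec, Matrix.one_mulVec] at hv
    have hYv : Y *ᵥ v = projM (fromCols X₁ X₂) *ᵥ (Y *ᵥ v) := sub_eq_zero.mp hv
    have hPYv : projM (fromCols X₁ X₂) *ᵥ (Y *ᵥ v) = fromCols X₁ X₂ *ᵥ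
        (((fromCols X₁ X₂)ᵀ * fromCols X₁ X₂)⁻¹ *ᵥ ((fromCols X₁ X₂)ᵀ *ᵥ (Y *ᵥ v))) := by
      rw [projM, ← Matrix.mulVec_mulVec, ← Matrix.mulVec_mulVec]
    have key : fromCols Y (fromCols X₁ X₂) *ᵥ Sum.elim v
        (-(((fromCols X₁ X₂)ᵀ * fromCols X₁ X₂)⁻¹ *ᵥ
          ((fromCols X₁ X₂)ᵀ *ᵥ (Y *ᵥ v)))) = 0 := by
      rw [fromCols_mulVec_sumElim, Matrix.mulVec_neg, ← hPYv, ← hYv]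
      simp
    exact funext fun i => congrFun (hYXinj _ key) (Sum.inl i)
  have hNYinj : ∀ v, (N1 X₁ X₂ * Y) *ᵥ v = 0 → v = 0 := by
    intro v hv
    rw [← Matrix.mulVec_mulVec, hN, Matrix.sub_mulVec] at hv
    have hYv : projM (fromCols X₁ X₂) *ᵥ (Y *ᵥ v) = projM X₁ *ᵥ (Y *ᵥ v) :=
      sub_eq_zero.mp hv
    have hP₁Yv : projM X₁ *ᵥ (Y *ᵥ v) = X₁ *ᵥ
        ((X₁ᵀ * X₁)⁻¹ *ᵥ (X₁ᵀ *ᵥ (Y *ᵥ v))) := by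
      rw [projM, ← Matrix.mulVec_mulVec, ← Matrix.mulVec_mulVec]
    have key : fromCols (Pm X₁ X₂ * Y) X₁ *ᵥ Sum.elim v
        (-((X₁ᵀ * X₁)⁻¹ *ᵥ (X₁ᵀ *ᵥ (Y *ᵥ v)))) = 0 := by
      rw [fromCols_mulVec_sumElim, Matrix.mulVec_neg, ← hP₁Yv, ← hYv]
      have : (Pm X₁ X₂ * Y) *ᵥ v = projM (fromCols X₁ X₂) *ᵥ (Y *ᵥ v) := by
        rw [← Matrix.mulVec_mulVec]; rfl
      rw [this]; simp
    exact funext fun i => congrFun (hPYinj _ key) (Sum.inl i)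
  -- positive definiteness of gram matrices
  have hSpd : (Yᵀ * Mm X₁ X₂ * Y).PosDef := by
    have h := posDef_transpose_mul_self' (Mm X₁ X₂ * Y) hMmYinj
    have e : (Mm X₁ X₂ * Y)ᵀ * (Mm X₁ X₂ * Y) = Yᵀ * Mm X₁ X₂ * Y := by
      rw [Matrix.transpose_mul, hMmT, Matrix.mul_assoc, ← Matrix.mul_assoc (Mm X₁ X₂),
        hMmMm, ← Matrix.mul_assoc]
    rwa [e] at h
  have hApd : (Yᵀ * N1 X₁ X₂ * Y).PosDef := by
    have h := posDef_transpose_mul_self' (N1 X₁ X₂ * Y) hNYinj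
    have e : (N1 X₁ X₂ * Y)ᵀ * (N1 X₁ X₂ * Y) = Yᵀ * N1 X₁ X₂ * Y := by
      rw [Matrix.transpose_mul, hNT, Matrix.mul_assoc, ← Matrix.mul_assoc (N1 X₁ X₂),
        hNN, ← Matrix.mul_assoc]
    rwa [e] at h
  set S := Yᵀ * Mm X₁ X₂ * Y with hSdef
  set A := Yᵀ * N1 X₁ X₂ * Y with hAdef
  set L := Yᵀ * M1 X₁ * Y with hLdef
  have hLdec : L = S + A := by
    rw [hLdef, hM1dec, Matrix.mul_add, Matrix.add_mul, hSdef, hAdef]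
  have hLpd : L.PosDef := by rw [hLdec]; exact hSpd.add hApd
  have hSd : IsUnit S.det := isUnit_iff_ne_zero.mpr hSpd.det_pos.ne'
  have hAd : IsUnit A.det := isUnit_iff_ne_zero.mpr hApd.det_pos.ne'
  have hLd : IsUnit L.det := isUnit_iff_ne_zero.mpr hLpd.det_pos.ne'
  have hc : (T : ℝ) ≠ 0 := Nat.cast_ne_zero.mpr hT.ne'
  have hci : ((T : ℝ)⁻¹ : ℝ) ≠ 0 := inv_ne_zero hc
  have hOmIV : OmIV Y X₁ X₂ = (T : ℝ)⁻¹ • A := rfl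
  have hOmLS : OmLS Y X₁ = (T : ℝ)⁻¹ • L := rfl
  have hSigV : SigV Y X₁ X₂ = (T : ℝ)⁻¹ • S := rfl
  clear_value S A L
  have hDhat : Dhat Y X₁ X₂ = (T : ℝ) • (A⁻¹ - L⁻¹) := by
    rw [Dhat, hOmIV, hOmLS, inv_smul_mat hci hAd, inv_smul_mat hci hLd, inv_inv, ← smul_sub]
  -- the candidate inverse
  have hkey3 : L * S⁻¹ * A = A + A * S⁻¹ * A := by
    rw [hLdec, Matrix.add_mul, Matrix.add_mul, Matrix.mul_nonsing_inv _ hSd, Matrix.one_mul,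
      add_comm]
  have hLSL : L * S⁻¹ * L = L * S⁻¹ * A + L := by
    nth_rewrite 2 [hLdec]
    rw [Matrix.mul_add, Matrix.mul_assoc L, Matrix.nonsing_inv_mul _ hSd, Matrix.mul_one,
      add_comm]
  have hkey : (A⁻¹ - L⁻¹) * (L * S⁻¹ * A) = 1 := by
    rw [Matrix.sub_mul]
    have e1 : L⁻¹ * (L * S⁻¹ * A) = S⁻¹ * A := by
      rw [Matrix.mul_assoc L, ← Matrix.mul_assoc L⁻¹, Matrix.nonsing_inv_mul _ hLd,
        Matrix.one_mul]
    have e2 : A⁻¹ * (L * S⁻¹ * A) = 1 + S⁻¹ * A := by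
      rw [hkey3, Matrix.mul_add, Matrix.nonsing_inv_mul _ hAd, ← Matrix.mul_assoc,
        ← Matrix.mul_assoc, Matrix.nonsing_inv_mul _ hAd, Matrix.one_mul]
    rw [e1, e2]
    abel
  have hDkey : Dhat Y X₁ X₂ * ((T : ℝ)⁻¹ • (L * S⁻¹ * A)) = 1 := by
    rw [hDhat, Matrix.smul_mul, Matrix.mul_smul, smul_smul, mul_inv_cancel₀ hc, one_smul,
      hkey]
  have hDinv : (Dhat Y X₁ X₂)⁻¹ = (T : ℝ)⁻¹ • (L * S⁻¹ * A) :=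
    Matrix.inv_eq_right_inv hDkey
  have hSinv : (SigV Y X₁ X₂)⁻¹ = (T : ℝ) • S⁻¹ := by
    rw [hSigV, inv_smul_mat hci hSd, inv_inv]
  refine ⟨?_, ?_, ?_, ?_, ?_, ?_, ?_⟩
  · rw [hOmLS, hOmIV, hSigV, ← smul_sub, hLdec]
    congr 1
    abel
  · exact (Matrix.isUnit_iff_isUnit_det _).mpr (Matrix.isUnit_det_of_right_inverse hDkey)
  · rw [hDinv, hOmIV, hSinv, hkey3, smul_add]
    congr 1
    simp only [Matrix.smul_mul, Matrix.mul_smul, smul_smul]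
    congr 1
    field_simp
  · rw [hDinv, hOmLS, hSinv]
    have h4' : L * S⁻¹ * A = L * S⁻¹ * L - L := by rw [hLSL]; abel
    rw [h4']
    simp only [Matrix.smul_mul, Matrix.mul_smul, smul_smul, smul_sub]
    congr 2
    field_simp
  · rw [hDinv]
    congr 1
    have hNNY : N1 X₁ X₂ * (N1 X₁ X₂ * Y) = N1 X₁ X₂ * Y := by
      rw [← Matrix.mul_assoc, hNN]
    rw [hkey3]
    simp only [Matrix.mul_add, Matrix.add_mul, Matrix.mul_one, Matrix.one_mul,
      Matrix.mul_assoc, hNNY, hAdef, hSdef]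
  · rw [hDinv]
    congr 1
    have hMMY : M1 X₁ * (M1 X₁ * Y) = M1 X₁ * Y := by
      rw [← Matrix.mul_assoc, hM1M1]
    have : L * S⁻¹ * A = L * S⁻¹ * L - L := by rw [hLSL]; abel
    rw [this]
    simp only [Matrix.mul_sub, Matrix.sub_mul, Matrix.mul_one, Matrix.one_mul,
      Matrix.mul_assoc, hMMY, hLdef, hSdef]
  · rw [hDinv, hkey3]
    have hTpos : (0 : ℝ) < (T : ℝ)⁻¹ := by positivity
    refine posDef_smul_of_pos ?_ hTpos
    refine hApd.add_posSemidef ?_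
    have h5 := (hSpd.inv.posSemidef).conjTranspose_mul_mul_same A
    rwa [hApd.1] at h5
end

section
/- Under the rank condition, the variance-estimator quantities admit the quadratic-form representations: σ̂² = yᵀΛ₄y, σ̃² = yᵀΛ₃y, σ̃₁² = yᵀΛ₁y, and σ̃₂² = yᵀΛ₂y. -/
open Matrix

variable {T G k₁ k₂ : ℕ}

section AuxGeneric

open Function

variable {m n : Type*} [Fintype m] [Fintype n] [DecidableEq n]

lemma aux_inj_of_rank (A : Matrix m n ℝ) (h : A.rank = Fintype.card n) :
    Function.Injective A.mulVec := by
  have hrn := LinearMap.finrank_range_add_finrank_ker A.mulVecLin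
  rw [Matrix.rank] at h
  have hdom : Module.finrank ℝ (n → ℝ) = Fintype.card n :=
    Module.finrank_fintype_fun_eq_card ℝ
  have hker : Module.finrank ℝ (LinearMap.ker A.mulVecLin) = 0 := by omega
  have hbot : LinearMap.ker A.mulVecLin = ⊥ := Submodule.finrank_eq_zero.mp hker
  have hinj : Function.Injective A.mulVecLin := LinearMap.ker_eq_bot.mp hbot
  simpa [Matrix.coe_mulVecLin] using hinj

lemma aux_isUnit_gram (A : Matrix m n ℝ) (h : Function.Injective A.mulVec) :
    IsUnit (Aᵀ * A) := by
  rw [← Matrix.mulVec_injective_iff_isUnit]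
  have hker : LinearMap.ker (Aᵀ * A).mulVecLin = ⊥ := by
    rw [Matrix.ker_mulVecLin_transpose_mul_self]
    exact LinearMap.ker_eq_bot.mpr (by simpa [Matrix.coe_mulVecLin] using h)
  exact LinearMap.ker_eq_bot.mp hker

lemma aux_inj_zero {A : Matrix m n ℝ} (h : ∀ v, A *ᵥ v = 0 → v = 0) :
    Function.Injective A.mulVec := by
  have hbot : LinearMap.ker A.mulVecLin = ⊥ := LinearMap.ker_eq_bot'.mpr (by simpa using h)
  have hinj : Function.Injective A.mulVecLin := LinearMap.ker_eq_bot.mp hbot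
  simpa [Matrix.coe_mulVecLin] using hinj

lemma aux_quad {a b : Type*} [Fintype a] [Fintype b]
    (A : Matrix a b ℝ) (M : Matrix a a ℝ) (y : b → ℝ) :
    (A *ᵥ y) ⬝ᵥ (M *ᵥ (A *ᵥ y)) = y ⬝ᵥ ((Aᵀ * M * A) *ᵥ y) := by
  rw [mulVec_mulVec, dotProduct_mulVec, dotProduct_mulVec,
    ← Matrix.vecMul_transpose, Matrix.vecMul_vecMul, Matrix.mul_assoc]

end AuxGeneric

section AuxProj

variable {T : ℕ} {n : Type*} [Fintype n] [DecidableEq n] (A : Matrix (Fin T) n ℝ)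

lemma projM_transpose_s8 : (projM A)ᵀ = projM A := by
  simp [projM, Matrix.transpose_mul, Matrix.transpose_nonsing_inv, Matrix.mul_assoc]

lemma projM_mul_col (hU : IsUnit (Aᵀ * A)) : projM A * A = A := by
  simp only [projM, Matrix.mul_assoc]
  rw [Matrix.nonsing_inv_mul _ ((Matrix.isUnit_iff_isUnit_det _).mp hU), Matrix.mul_one]

lemma projM_idem_s8 (hU : IsUnit (Aᵀ * A)) : projM A * projM A = projM A := by
  simp only [projM, Matrix.mul_assoc]
  rw [← Matrix.mul_assoc Aᵀ A, ← Matrix.mul_assoc (Aᵀ * A)⁻¹,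
    Matrix.nonsing_inv_mul _ ((Matrix.isUnit_iff_isUnit_det _).mp hU), Matrix.one_mul]

lemma annM_transpose : (annM A)ᵀ = annM A := by
  simp [annM, transpose_sub, projM_transpose_s8]

lemma annM_idem (hU : IsUnit (Aᵀ * A)) : annM A * annM A = annM A := by
  simp [annM, Matrix.mul_sub, Matrix.sub_mul, projM_idem_s8 A hU]

lemma annM_mul_col (hU : IsUnit (Aᵀ * A)) : annM A * A = 0 := by
  simp [annM, Matrix.sub_mul, projM_mul_col A hU]

end AuxProj

section AuxInj

variable {T k₁ : ℕ} {g : Type*} [Fintype g] [DecidableEq g]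

lemma aux_sub_inj {G k₂ : ℕ} (Y : Matrix (Fin T) (Fin G) ℝ) (X₁ : Matrix (Fin T) (Fin k₁) ℝ)
    (X₂ : Matrix (Fin T) (Fin k₂) ℝ)
    (h : Function.Injective (fromCols Y (fromCols X₁ X₂)).mulVec) :
    Function.Injective (fromCols Y X₁).mulVec := by
  apply aux_inj_zero
  intro v hv
  have hv' : v = Sum.elim (v ∘ Sum.inl) (v ∘ Sum.inr) := by
    funext x; cases x <;> rfl
  rw [hv', fromCols_mulVec_sumElim] at hv
  have hz : fromCols Y (fromCols X₁ X₂) *ᵥ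
      Sum.elim (v ∘ Sum.inl) (Sum.elim (v ∘ Sum.inr) (0 : Fin k₂ → ℝ)) = 0 := by
    rw [fromCols_mulVec_sumElim, fromCols_mulVec_sumElim, Matrix.mulVec_zero,
      add_zero, hv]
  have h0 : Sum.elim (v ∘ Sum.inl) (Sum.elim (v ∘ Sum.inr) (0 : Fin k₂ → ℝ)) = 0 := by
    apply h
    rw [hz, Matrix.mulVec_zero]
  funext x
  cases x with
  | inl i => exact congrFun h0 (Sum.inl i)
  | inr i => exact congrFun h0 (Sum.inr (Sum.inl i))

lemma aux_m1_inj (A : Matrix (Fin T) g ℝ) (X₁ : Matrix (Fin T) (Fin k₁) ℝ)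
    (hU : IsUnit (X₁ᵀ * X₁)) (h : Function.Injective (fromCols A X₁).mulVec) :
    Function.Injective (M1 X₁ * A).mulVec := by
  apply aux_inj_zero
  intro v hv
  rw [← Matrix.mulVec_mulVec] at hv
  have hfix : A *ᵥ v = projM X₁ *ᵥ (A *ᵥ v) := by
    rw [M1, annM, Matrix.sub_mulVec, Matrix.one_mulVec, sub_eq_zero] at hv
    exact hv
  have hX : A *ᵥ v = X₁ *ᵥ (((X₁ᵀ * X₁)⁻¹ * X₁ᵀ) *ᵥ (A *ᵥ v)) := by
    rw [Matrix.mulVec_mulVec, ← Matrix.mul_assoc, ← projM]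
    exact hfix
  have hz : fromCols A X₁ *ᵥ
      Sum.elim v (-(((X₁ᵀ * X₁)⁻¹ * X₁ᵀ) *ᵥ (A *ᵥ v))) = 0 := by
    rw [fromCols_mulVec_sumElim, Matrix.mulVec_neg, ← hX]
    simp
  have h0 : Sum.elim v (-(((X₁ᵀ * X₁)⁻¹ * X₁ᵀ) *ᵥ (A *ᵥ v))) = 0 := by
    apply h
    rw [hz, Matrix.mulVec_zero]
  funext i
  exact congrFun h0 (Sum.inl i)

end AuxInj

section AuxSandwich

variable {T : ℕ}

lemma aux_sandwich {Q D F : Matrix (Fin T) (Fin T) ℝ} (hQt : Qᵀ = Q) (hQi : Q * Q = Q)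
    (hQD : Q * D = F * Q) : Dᵀ * Q * D = Q * Fᵀ * (F * Q) := by
  calc Dᵀ * Q * D = Dᵀ * (Q * (Q * D)) := by
        rw [← Matrix.mul_assoc Q Q D, hQi, Matrix.mul_assoc]
    _ = (Q * D)ᵀ * (Q * D) := by rw [Matrix.transpose_mul, hQt, Matrix.mul_assoc]
    _ = (F * Q)ᵀ * (F * Q) := by rw [hQD]
    _ = Q * Fᵀ * (F * Q) := by rw [Matrix.transpose_mul, hQt]

lemma aux_sandwich' {Q D F : Matrix (Fin T) (Fin T) ℝ} (hQt : Qᵀ = Q) (hQi : Q * Q = Q)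
    (hFt : Fᵀ = F) (hFi : F * F = F) (hQD : Q * D = F * Q) : Dᵀ * Q * D = Q * F * Q := by
  rw [aux_sandwich hQt hQi hQD, hFt, Matrix.mul_assoc, ← Matrix.mul_assoc F F Q, hFi,
    ← Matrix.mul_assoc]

end AuxSandwich

/-- Under the rank condition, the variance-estimator quantities admit the quadratic-form
representations `σ̂² = yᵀΛ₄y`, `σ̃² = yᵀΛ₃y`, `σ̃₁² = yᵀΛ₁y`, and `σ̃₂² = yᵀΛ₂y`. -/
theorem stmt8 {T G k₁ k₂ : ℕ}
    (hT : 0 < T) (hG : 0 < G) (hk₁ : 0 < k₁) (hk₂ : 0 < k₂)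
    (y : Fin T → ℝ) (Y : Matrix (Fin T) (Fin G) ℝ)
    (X₁ : Matrix (Fin T) (Fin k₁) ℝ) (X₂ : Matrix (Fin T) (Fin k₂) ℝ)
    (hrank : RankCond Y X₁ X₂) :
    sigHat2 y Y X₁ = y ⬝ᵥ (Lam4 Y X₁ *ᵥ y) ∧
    sigTil2 y Y X₁ X₂ = y ⬝ᵥ (Lam3 Y X₁ X₂ *ᵥ y) ∧
    sigTil1sq y Y X₁ X₂ = y ⬝ᵥ (Lam1 Y X₁ X₂ *ᵥ y) ∧
    sigTil2sq y Y X₁ X₂ = y ⬝ᵥ (Lam2 Y X₁ X₂ *ᵥ y) := by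
  obtain ⟨h1, h2, h3, h4⟩ := hrank
  -- basic unit facts
  have hUX₁ : IsUnit (X₁ᵀ * X₁) :=
    aux_isUnit_gram _ (aux_inj_of_rank _ (by simpa using h1))
  have hUX : IsUnit ((fromCols X₁ X₂)ᵀ * fromCols X₁ X₂) :=
    aux_isUnit_gram _ (aux_inj_of_rank _ (by simpa using h2))
  have hZinj : Function.Injective (fromCols Y (fromCols X₁ X₂)).mulVec :=
    aux_inj_of_rank _ (by simpa using h3)
  have hPYinj : Function.Injective (fromCols (Pm X₁ X₂ * Y) X₁).mulVec :=
    aux_inj_of_rank _ (by simpa using h4)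
  -- M₁ facts
  have hM1t : (M1 X₁)ᵀ = M1 X₁ := annM_transpose X₁
  have hM1i : M1 X₁ * M1 X₁ = M1 X₁ := annM_idem X₁ hUX₁
  -- P facts
  have hPt : (Pm X₁ X₂)ᵀ = Pm X₁ X₂ := projM_transpose_s8 _
  have hPi : Pm X₁ X₂ * Pm X₁ X₂ = Pm X₁ X₂ := projM_idem_s8 _ hUX
  have hPX : Pm X₁ X₂ * fromCols X₁ X₂ = fromCols X₁ X₂ := projM_mul_col _ hUX
  have hPX1 : Pm X₁ X₂ * X₁ = X₁ := by
    rw [Matrix.mul_fromCols] at hPX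
    exact ((fromCols_ext_iff _ _ _ _).mp hPX).1
  have hPP1 : Pm X₁ X₂ * projM X₁ = projM X₁ := by
    rw [projM, ← Matrix.mul_assoc, ← Matrix.mul_assoc, hPX1]
  have hP1P : projM X₁ * Pm X₁ X₂ = projM X₁ := by
    rw [← hPt, ← projM_transpose_s8 X₁, ← Matrix.transpose_mul, hPP1, projM_transpose_s8]
  -- N₁ facts
  have hN1eq : N1 X₁ X₂ = Pm X₁ X₂ - projM X₁ := by
    rw [N1, M1, annM, Matrix.sub_mul, Matrix.one_mul, hP1P]
  have hN1t : (N1 X₁ X₂)ᵀ = N1 X₁ X₂ := by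
    rw [hN1eq, Matrix.transpose_sub, hPt, projM_transpose_s8]
  have hN1i : N1 X₁ X₂ * N1 X₁ X₂ = N1 X₁ X₂ := by
    rw [hN1eq, Matrix.sub_mul, Matrix.mul_sub, Matrix.mul_sub, hPi, hPP1, hP1P,
      projM_idem_s8 X₁ hUX₁]
    abel
  have hN1M1 : N1 X₁ X₂ * M1 X₁ = N1 X₁ X₂ := by
    rw [hN1eq, M1, annM, Matrix.mul_sub, Matrix.mul_one, Matrix.sub_mul, hPP1,
      projM_idem_s8 X₁ hUX₁]
    abel
  have hM1N1 : M1 X₁ * N1 X₁ X₂ = N1 X₁ X₂ := by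
    rw [N1, ← Matrix.mul_assoc, hM1i]
  -- gram units
  have hYX₁inj : Function.Injective (fromCols Y X₁).mulVec := aux_sub_inj Y X₁ X₂ hZinj
  have hMYinj : Function.Injective (M1 X₁ * Y).mulVec := aux_m1_inj Y X₁ hUX₁ hYX₁inj
  have hUMY : IsUnit ((M1 X₁ * Y)ᵀ * (M1 X₁ * Y)) := aux_isUnit_gram _ hMYinj
  have hgramM : (M1 X₁ * Y)ᵀ * (M1 X₁ * Y) = Yᵀ * M1 X₁ * Y := by
    rw [Matrix.transpose_mul, hM1t, Matrix.mul_assoc, ← Matrix.mul_assoc (M1 X₁), hM1i,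
      ← Matrix.mul_assoc]
  have hUM : IsUnit (Yᵀ * M1 X₁ * Y) := hgramM ▸ hUMY
  have hNYinj : Function.Injective (M1 X₁ * (Pm X₁ X₂ * Y)).mulVec :=
    aux_m1_inj (Pm X₁ X₂ * Y) X₁ hUX₁ hPYinj
  have hN1Ydef : N1 X₁ X₂ * Y = M1 X₁ * (Pm X₁ X₂ * Y) := by
    rw [N1, Matrix.mul_assoc]
  have hUNY : IsUnit ((N1 X₁ X₂ * Y)ᵀ * (N1 X₁ X₂ * Y)) := by
    rw [hN1Ydef]; exact aux_isUnit_gram _ hNYinj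
  have hgramN : (N1 X₁ X₂ * Y)ᵀ * (N1 X₁ X₂ * Y) = Yᵀ * N1 X₁ X₂ * Y := by
    rw [Matrix.transpose_mul, hN1t, Matrix.mul_assoc, ← Matrix.mul_assoc (N1 X₁ X₂), hN1i,
      ← Matrix.mul_assoc]
  have hUN : IsUnit (Yᵀ * N1 X₁ X₂ * Y) := hgramN ▸ hUNY
  -- annihilator symmetry/idempotency for the fitted matrices
  have hEMt : (annM (M1 X₁ * Y))ᵀ = annM (M1 X₁ * Y) := annM_transpose _
  have hEMi : annM (M1 X₁ * Y) * annM (M1 X₁ * Y) = annM (M1 X₁ * Y) := annM_idem _ hUMY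
  have hENt : (annM (N1 X₁ X₂ * Y))ᵀ = annM (N1 X₁ X₂ * Y) := annM_transpose _
  have hENi : annM (N1 X₁ X₂ * Y) * annM (N1 X₁ X₂ * Y) = annM (N1 X₁ X₂ * Y) :=
    annM_idem _ hUNY
  -- B absorption
  have hB1M1 : B1 Y X₁ * M1 X₁ = B1 Y X₁ := by
    rw [B1, Matrix.mul_assoc _ (Yᵀ * M1 X₁) (M1 X₁), Matrix.mul_assoc Yᵀ (M1 X₁) (M1 X₁), hM1i]
  have hB2M1 : B2 Y X₁ X₂ * M1 X₁ = B2 Y X₁ X₂ := by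
    rw [B2, Matrix.mul_assoc _ (Yᵀ * N1 X₁ X₂) (M1 X₁),
      Matrix.mul_assoc Yᵀ (N1 X₁ X₂) (M1 X₁), hN1M1]
  -- key Q·D = F·Q identities
  have hQD1 : M1 X₁ * (1 - Y * B1 Y X₁) = annM (M1 X₁ * Y) * M1 X₁ := by
    rw [annM, projM, hgramM, Matrix.transpose_mul, hM1t]
    simp only [B1, Matrix.mul_sub, Matrix.sub_mul, Matrix.mul_one, Matrix.one_mul,
      Matrix.mul_assoc, hM1i]
  have hQD2 : M1 X₁ * (1 - Y * B2 Y X₁ X₂) = N2 Y X₁ X₂ * M1 X₁ := by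
    simp only [N2, Matrix.mul_sub, Matrix.sub_mul, Matrix.mul_one, Matrix.one_mul,
      Matrix.mul_assoc, hB2M1]
  have hQD3 : N1 X₁ X₂ * (1 - Y * B2 Y X₁ X₂) = annM (N1 X₁ X₂ * Y) * N1 X₁ X₂ := by
    rw [annM, projM, hgramN, Matrix.transpose_mul, hN1t]
    simp only [B2, Matrix.mul_sub, Matrix.sub_mul, Matrix.mul_one, Matrix.one_mul,
      Matrix.mul_assoc, hN1i]
  -- sandwich identities
  have hS1 : (1 - Y * B1 Y X₁)ᵀ * M1 X₁ * (1 - Y * B1 Y X₁) =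
      M1 X₁ * annM (M1 X₁ * Y) * M1 X₁ := by
    rw [aux_sandwich' hM1t hM1i hEMt hEMi hQD1]
  have hS2 : (1 - Y * B2 Y X₁ X₂)ᵀ * M1 X₁ * (1 - Y * B2 Y X₁ X₂) =
      M1 X₁ * (N2 Y X₁ X₂)ᵀ * N2 Y X₁ X₂ * M1 X₁ := by
    rw [aux_sandwich hM1t hM1i hQD2, Matrix.mul_assoc (M1 X₁ * (N2 Y X₁ X₂)ᵀ)]
  have hS3 : (1 - Y * B2 Y X₁ X₂)ᵀ * N1 X₁ X₂ * (1 - Y * B2 Y X₁ X₂) =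
      N1 X₁ X₂ * annM (N1 X₁ X₂ * Y) * N1 X₁ X₂ :=
    aux_sandwich' hN1t hN1i hENt hENi hQD3
  -- residual vectors
  have hres1 : y - Y *ᵥ betaOLS y Y X₁ = (1 - Y * B1 Y X₁) *ᵥ y := by
    rw [betaOLS, Matrix.sub_mulVec, Matrix.one_mulVec, Matrix.mulVec_mulVec]
  have hres2 : y - Y *ᵥ beta2S y Y X₁ X₂ = (1 - Y * B2 Y X₁ X₂) *ᵥ y := by
    rw [beta2S, Matrix.sub_mulVec, Matrix.one_mulVec, Matrix.mulVec_mulVec]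
  -- claim 1
  have c1 : sigHat2 y Y X₁ = y ⬝ᵥ (Lam4 Y X₁ *ᵥ y) := by
    rw [sigHat2, hres1, aux_quad, hS1, Lam4, Matrix.smul_mulVec, dotProduct_smul,
      smul_eq_mul]
  have c2 : sigTil2 y Y X₁ X₂ = y ⬝ᵥ (Lam3 Y X₁ X₂ *ᵥ y) := by
    rw [sigTil2, hres2, aux_quad, hS2, Lam3, Matrix.smul_mulVec, dotProduct_smul,
      smul_eq_mul]
  have c3 : sigTil1sq y Y X₁ X₂ = y ⬝ᵥ (Lam1 Y X₁ X₂ *ᵥ y) := by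
    rw [sigTil1sq, hres2, aux_quad, hS3, Lam1, Matrix.smul_mulVec, dotProduct_smul,
      smul_eq_mul]
  -- claim 4
  have hC1M1 : C1 Y X₁ X₂ * M1 X₁ = C1 Y X₁ X₂ := by
    rw [C1, Matrix.sub_mul, hB1M1, hB2M1]
  have hM1C1t : M1 X₁ * (C1 Y X₁ X₂)ᵀ = (C1 Y X₁ X₂)ᵀ := by
    rw [← hM1t, ← Matrix.transpose_mul, hC1M1]
  have hPsi : M1 X₁ * Psi0 Y X₁ X₂ * M1 X₁ =
      (C1 Y X₁ X₂)ᵀ * (Dhat Y X₁ X₂)⁻¹ * C1 Y X₁ X₂ := by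
    rw [Psi0, ← Matrix.mul_assoc, ← Matrix.mul_assoc, hM1C1t, Matrix.mul_assoc,
      Matrix.mul_assoc, hC1M1, ← Matrix.mul_assoc]
  have hd : beta2S y Y X₁ X₂ - betaOLS y Y X₁ = C1 Y X₁ X₂ *ᵥ y := by
    rw [C1, Matrix.sub_mulVec, beta2S, betaOLS]
  have hLam2 : Lam2 Y X₁ X₂ = (T : ℝ)⁻¹ • (M1 X₁ * annM (M1 X₁ * Y) * M1 X₁) -
      (C1 Y X₁ X₂)ᵀ * (Dhat Y X₁ X₂)⁻¹ * C1 Y X₁ X₂ := by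
    rw [Lam2, Matrix.mul_sub, Matrix.sub_mul, ← hPsi, Matrix.mul_smul, Matrix.smul_mul]
  have c1' : sigHat2 y Y X₁ =
      (T : ℝ)⁻¹ * (y ⬝ᵥ ((M1 X₁ * annM (M1 X₁ * Y) * M1 X₁) *ᵥ y)) := by
    rw [c1, Lam4, Matrix.smul_mulVec, dotProduct_smul, smul_eq_mul]
  have c4 : sigTil2sq y Y X₁ X₂ = y ⬝ᵥ (Lam2 Y X₁ X₂ *ᵥ y) := by
    rw [sigTil2sq, hd, aux_quad, hLam2, Matrix.sub_mulVec, dotProduct_sub,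
      Matrix.smul_mulVec, dotProduct_smul, smul_eq_mul, ← c1']
  exact ⟨c1, c2, c3, c4⟩
end
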